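/- Let A be an n×n real symmetric positive definite matrix and Z an n×k real matrix such that A − Z Zᵀ is positive definite. Then the k×k matrix I_k − Zᵀ A⁻¹ Z is symmetric positive definite, and setting V = A⁻¹ Z (I_k − Zᵀ A⁻¹ Z)^{−1/2}, one has (A − Z Zᵀ)⁻¹ − A⁻¹ = V Vᵀ. -/

import Mathlib

open Matrix

section
open scoped ComplexOrder

/-- The square root of a positive semidefinite matrix, as defined in Mathlib (Dec 2024). -/
noncomputable def Matrix.PosSemidef.sqrt {n : Type*} [Fintype n] [DecidableEq n] {𝕜 : Type*}
    [RCLike 𝕜] {A : Matrix n n 𝕜} (hA : A.PosSemidef) : Matrix n n 𝕜 :=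
  hA.1.eigenvectorUnitary.1 * diagonal ((↑) ∘ (√·) ∘ hA.1.eigenvalues) *
    (star hA.1.eigenvectorUnitary : Matrix n n 𝕜)

end

section
open scoped ComplexOrder

lemma Matrix.PosSemidef.posSemidef_sqrt {n : Type*} [Fintype n] [DecidableEq n] {𝕜 : Type*}
    [RCLike 𝕜] {A : Matrix n n 𝕜} (hA : A.PosSemidef) : hA.sqrt.PosSemidef := by
  unfold Matrix.PosSemidef.sqrt
  have := (posSemidef_diagonal_iff (d := ((↑) ∘ (√·) ∘ hA.1.eigenvalues : n → 𝕜))).mpr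
    (fun i => by simp [Real.sqrt_nonneg])
  simpa [Matrix.star_eq_conjTranspose] using this.mul_mul_conjTranspose_same
    (hA.1.eigenvectorUnitary : Matrix n n 𝕜)

lemma Matrix.PosSemidef.sqrt_mul_self {n : Type*} [Fintype n] [DecidableEq n] {𝕜 : Type*}
    [RCLike 𝕜] {A : Matrix n n 𝕜} (hA : A.PosSemidef) : hA.sqrt * hA.sqrt = A := by
  unfold Matrix.PosSemidef.sqrt
  conv_rhs => rw [hA.1.spectral_theorem]
  rw [Unitary.conjStarAlgAut_apply]
  have hU : (star hA.1.eigenvectorUnitary : Matrix n n 𝕜) * hA.1.eigenvectorUnitary.1 = 1 :=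
    Unitary.coe_star_mul_self _
  have hD : diagonal ((↑) ∘ (√·) ∘ hA.1.eigenvalues : n → 𝕜) *
      diagonal ((↑) ∘ (√·) ∘ hA.1.eigenvalues : n → 𝕜) =
      diagonal (RCLike.ofReal ∘ hA.1.eigenvalues) := by
    rw [diagonal_mul_diagonal]
    congr 1
    funext i
    simp only [Function.comp_apply, ← RCLike.ofReal_mul]
    rw [Real.mul_self_sqrt (hA.eigenvalues_nonneg i)]
  calc _ = hA.1.eigenvectorUnitary.1 * diagonal ((↑) ∘ (√·) ∘ hA.1.eigenvalues) *
        ((star hA.1.eigenvectorUnitary : Matrix n n 𝕜) * hA.1.eigenvectorUnitary.1) *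
        diagonal ((↑) ∘ (√·) ∘ hA.1.eigenvalues) *
        (star hA.1.eigenvectorUnitary : Matrix n n 𝕜) := by simp only [Matrix.mul_assoc]
    _ = _ := by rw [hU, Matrix.mul_one, Matrix.mul_assoc _ (diagonal _) (diagonal _), hD]

end

private lemma posDef_of_posSemidef_of_rightInv {k : ℕ} {S T : Matrix (Fin k) (Fin k) ℝ}
    (hS : S.PosSemidef) (hT : S * T = 1) : S.PosDef :=
  hS.posDef_iff_isUnit.mpr (⟨⟨S, T, hT, mul_eq_one_comm.mp hT⟩, rfl⟩)

theorem smw_downdate_factor {n k : ℕ} (A : Matrix (Fin n) (Fin n) ℝ) (hA : A.PosDef)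
    (Z : Matrix (Fin n) (Fin k) ℝ) (hAZ : (A - Z * Zᵀ).PosDef) :
    ∃ h : ((1 : Matrix (Fin k) (Fin k) ℝ) - Zᵀ * A⁻¹ * Z).PosDef,
      (A - Z * Zᵀ)⁻¹ - A⁻¹ =
        (A⁻¹ * Z * (h.posSemidef.sqrt)⁻¹) * (A⁻¹ * Z * (h.posSemidef.sqrt)⁻¹)ᵀ := by
  haveI : Invertible A := hA.isUnit.invertible
  haveI : Invertible (A - Z * Zᵀ) := hAZ.isUnit.invertible
  haveI : Invertible (1 : Matrix (Fin k) (Fin k) ℝ) := invertibleOne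
  have hAA : A * A⁻¹ = 1 := Matrix.mul_inv_of_invertible A
  have hA'A : A⁻¹ * A = 1 := Matrix.inv_mul_of_invertible A
  have hBB : (A - Z * Zᵀ) * (A - Z * Zᵀ)⁻¹ = 1 := Matrix.mul_inv_of_invertible _
  have hZct : Zᴴ = Zᵀ := Z.conjTranspose_eq_transpose_of_trivial
  -- S := 1 - Zᵀ A⁻¹ Z is positive semidefinite, via Schur complements
  have hSsemi : ((1 : Matrix (Fin k) (Fin k) ℝ) - Zᵀ * A⁻¹ * Z).PosSemidef := by
    have h1 : (fromBlocks A Z Zᴴ (1 : Matrix (Fin k) (Fin k) ℝ)).PosSemidef := by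
      rw [Matrix.PosDef.fromBlocks₂₂ A Z Matrix.PosDef.one]
      simpa [hZct] using hAZ.posSemidef
    have := (Matrix.PosDef.fromBlocks₁₁ Z (1 : Matrix (Fin k) (Fin k) ℝ) hA).mp h1
    simpa [hZct] using this
  -- S has a right inverse, hence is positive definite
  have hkey : A⁻¹ * (Z * Zᵀ) * (A - Z * Zᵀ)⁻¹ = (A - Z * Zᵀ)⁻¹ - A⁻¹ := by
    have haux : A⁻¹ * (A - (A - Z * Zᵀ)) * (A - Z * Zᵀ)⁻¹ = (A - Z * Zᵀ)⁻¹ - A⁻¹ := by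
      rw [Matrix.mul_sub, Matrix.sub_mul, hA'A, Matrix.one_mul, Matrix.mul_assoc, hBB,
        Matrix.mul_one]
    rwa [sub_sub_cancel] at haux
  have hST : ((1 : Matrix (Fin k) (Fin k) ℝ) - Zᵀ * A⁻¹ * Z)
      * (1 + Zᵀ * (A - Z * Zᵀ)⁻¹ * Z) = 1 := by
    have expand : ((1 : Matrix (Fin k) (Fin k) ℝ) - Zᵀ * A⁻¹ * Z)
          * (1 + Zᵀ * (A - Z * Zᵀ)⁻¹ * Z)
        = 1 + Zᵀ * (A - Z * Zᵀ)⁻¹ * Z - Zᵀ * A⁻¹ * Z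
          - Zᵀ * (A⁻¹ * (Z * Zᵀ) * (A - Z * Zᵀ)⁻¹) * Z := by
      simp only [Matrix.mul_add, Matrix.add_mul, Matrix.mul_sub, Matrix.sub_mul,
        Matrix.mul_one, Matrix.one_mul, Matrix.mul_assoc]
      abel
    rw [expand, hkey, Matrix.mul_sub Zᵀ, Matrix.sub_mul]
    abel
  have hS : ((1 : Matrix (Fin k) (Fin k) ℝ) - Zᵀ * A⁻¹ * Z).PosDef :=
    posDef_of_posSemidef_of_rightInv hSsemi hST
  refine ⟨hS, ?_⟩
  haveI : Invertible ((1 : Matrix (Fin k) (Fin k) ℝ) - Zᵀ * A⁻¹ * Z) := hS.isUnit.invertible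
  have hSS : ((1 : Matrix (Fin k) (Fin k) ℝ) - Zᵀ * A⁻¹ * Z)
      * ((1 : Matrix (Fin k) (Fin k) ℝ) - Zᵀ * A⁻¹ * Z)⁻¹ = 1 := Matrix.mul_inv_of_invertible _
  -- Woodbury identity
  have hwood : (A - Z * Zᵀ)⁻¹
      = A⁻¹ + A⁻¹ * Z * ((1 : Matrix (Fin k) (Fin k) ℝ) - Zᵀ * A⁻¹ * Z)⁻¹ * Zᵀ * A⁻¹ := by
    apply Matrix.inv_eq_right_inv
    have hBAZ : (A - Z * Zᵀ) * (A⁻¹ * Z)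
        = Z * ((1 : Matrix (Fin k) (Fin k) ℝ) - Zᵀ * A⁻¹ * Z) := by
      rw [Matrix.sub_mul, Matrix.mul_sub, Matrix.mul_one, ← Matrix.mul_assoc A, hAA,
        Matrix.one_mul]
      simp only [Matrix.mul_assoc]
    have e1 : (A - Z * Zᵀ)
          * (A⁻¹ + A⁻¹ * Z * ((1 : Matrix (Fin k) (Fin k) ℝ) - Zᵀ * A⁻¹ * Z)⁻¹ * Zᵀ * A⁻¹)
        = (A - Z * Zᵀ) * A⁻¹ + ((A - Z * Zᵀ) * (A⁻¹ * Z))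
          * (((1 : Matrix (Fin k) (Fin k) ℝ) - Zᵀ * A⁻¹ * Z)⁻¹ * (Zᵀ * A⁻¹)) := by
      simp only [Matrix.mul_add, Matrix.mul_assoc]
    rw [e1, hBAZ, Matrix.mul_assoc Z, ← Matrix.mul_assoc _ _ (Zᵀ * A⁻¹), hSS, Matrix.one_mul,
      Matrix.sub_mul, hAA]
    simp only [Matrix.mul_assoc]
    abel
  obtain ⟨R, hRdef⟩ : ∃ R, R = hS.posSemidef.sqrt := ⟨_, rfl⟩
  rw [← hRdef]
  have hRR : R * R = 1 - Zᵀ * A⁻¹ * Z := by rw [hRdef]; exact hS.posSemidef.sqrt_mul_self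
  have hRsym : Rᵀ = R := by
    rw [hRdef]
    conv_lhs => rw [← hS.posSemidef.posSemidef_sqrt.1.eq,
      Matrix.conjTranspose_eq_transpose_of_trivial, Matrix.transpose_transpose]
  have hRu : IsUnit R := by
    have h2 : IsUnit (R * R).det := (Matrix.isUnit_iff_isUnit_det _).mp (hRR ▸ hS.isUnit)
    rw [Matrix.det_mul] at h2
    exact (Matrix.isUnit_iff_isUnit_det R).mpr (isUnit_of_mul_isUnit_left h2)
  haveI : Invertible R := hRu.invertible
  have hRRi : R * R⁻¹ = 1 := Matrix.mul_inv_of_invertible R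
  have hSinv : ((1 : Matrix (Fin k) (Fin k) ℝ) - Zᵀ * A⁻¹ * Z)⁻¹ = R⁻¹ * R⁻¹ := by
    apply Matrix.inv_eq_right_inv
    rw [← hRR, Matrix.mul_assoc, ← Matrix.mul_assoc R R⁻¹, hRRi, Matrix.one_mul, hRRi]
  have hAinvT : A⁻¹ᵀ = A⁻¹ := by
    rw [Matrix.transpose_nonsing_inv]
    congr 1
    conv_lhs => rw [← hA.1.eq, Matrix.conjTranspose_eq_transpose_of_trivial,
      Matrix.transpose_transpose]
  have hRinvT : (R⁻¹)ᵀ = R⁻¹ := by rw [Matrix.transpose_nonsing_inv, hRsym]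
  rw [hwood, add_sub_cancel_left, hSinv]
  simp only [Matrix.transpose_mul, hRinvT, hAinvT, Matrix.transpose_transpose, Matrix.mul_assoc]
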